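/- Let (X, d_g) be a length space, Σ-free, p : X → (0,∞) continuous with δ = 1/p 1-Lipschitz along curves, and let d_p(x,y) := inf over rectifiable curves γ from x to y of ∫_γ p ds (arclength with respect to d_g). Then for all x, y ∈ X: log(1 + d_g(x,y)·max{p(x), p(y)}) ≤ d_p(x,y), and in particular |log δ(x) − log δ(y)| ≤ d_p(x,y). -/

import Mathlib

lemma aux_integral_inv_shift (c L : ℝ) (hc : 0 < c) (hL : 0 ≤ L) :
    ∫ s in (0:ℝ)..L, (c + s)⁻¹ = Real.log (1 + L / c) := by
  have := intervalIntegral.integral_comp_add_left (a := (0:ℝ)) (b := L)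
    (fun t : ℝ => t⁻¹) c
  rw [this, integral_inv_of_pos (by linarith) (by linarith)]
  congr 1
  field_simp
  ring

lemma aux_key (c L : ℝ) (hc : 0 < c) (hL : 0 ≤ L) (f : ℝ → ℝ)
    (hf : ContinuousOn f (Set.Icc 0 L))
    (hbd : ∀ s ∈ Set.Icc (0:ℝ) L, (c + s)⁻¹ ≤ f s) :
    Real.log (1 + L / c) ≤ ∫ s in (0:ℝ)..L, f s := by
  have h1 : IntervalIntegrable f MeasureTheory.volume 0 L :=
    (by rw [Set.uIcc_of_le hL]; exact hf : ContinuousOn f (Set.uIcc 0 L)).intervalIntegrable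
  have h2 : IntervalIntegrable (fun s : ℝ => (c + s)⁻¹) MeasureTheory.volume 0 L := by
    apply ContinuousOn.intervalIntegrable
    rw [Set.uIcc_of_le hL]
    apply ContinuousOn.inv₀ (by fun_prop)
    intro s hs
    have := hs.1
    positivity
  have := intervalIntegral.integral_mono_on hL h2 h1 hbd
  calc Real.log (1 + L / c) = ∫ s in (0:ℝ)..L, (c + s)⁻¹ :=
        (aux_integral_inv_shift c L hc hL).symm
    _ ≤ _ := this

lemma aux_curve_log_bound {X : Type*} [MetricSpace X] (p : X → ℝ) (hp : ∀ u, 0 < p u)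
    (hpc : Continuous p) (hlip : LipschitzWith 1 fun u => 1 / p u) {L : ℝ} {γ : ℝ → X}
    (hL : 0 ≤ L) (hγ : LipschitzOnWith 1 γ (Set.Icc 0 L)) :
    Real.log (1 + L * p (γ 0)) ≤ ∫ s in (0:ℝ)..L, p (γ s) := by
  set c := 1 / p (γ 0) with hcdef
  have hc : 0 < c := by rw [hcdef]; exact one_div_pos.mpr (hp _)
  have hcont : ContinuousOn (fun s => p (γ s)) (Set.Icc 0 L) :=
    hpc.comp_continuousOn hγ.continuousOn
  have h0mem : (0:ℝ) ∈ Set.Icc (0:ℝ) L := ⟨le_refl _, hL⟩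
  have hbd : ∀ s ∈ Set.Icc (0:ℝ) L, (c + s)⁻¹ ≤ p (γ s) := by
    intro s hs
    have hd : dist (1 / p (γ s)) (1 / p (γ 0)) ≤ dist (γ s) (γ 0) := by
      simpa using hlip.dist_le_mul (γ s) (γ 0)
    have hd2 : dist (γ s) (γ 0) ≤ s := by
      have := hγ.dist_le_mul s hs 0 h0mem
      simpa [Real.dist_eq, abs_of_nonneg hs.1] using this
    have hle : 1 / p (γ s) ≤ c + s := by
      rw [Real.dist_eq] at hd
      have := abs_le.mp (hd.trans hd2)
      linarith [this.2]
    have hps : 0 < 1 / p (γ s) := one_div_pos.mpr (hp _)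
    calc (c + s)⁻¹ ≤ (1 / p (γ s))⁻¹ := inv_anti₀ hps hle
      _ = p (γ s) := by rw [one_div, inv_inv]
  have hkey := aux_key c L hc hL _ hcont hbd
  have : L / c = L * p (γ 0) := by rw [hcdef]; field_simp
  rwa [this] at hkey

lemma aux_log_ratio {d a b M : ℝ} (ha : 0 < a) (hb : 0 < b) (hd : 0 ≤ d)
    (hM : 1 / b ≤ M) (hab : a ≤ b + d) :
    Real.log a - Real.log b ≤ Real.log (1 + d * M) := by
  rw [← Real.log_div ha.ne' hb.ne']
  apply Real.log_le_log (div_pos ha hb)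
  rw [div_le_iff₀ hb]
  have h1 : 1 ≤ M * b := by
    rw [div_le_iff₀ hb] at hM; linarith
  nlinarith


/-- Lower-bound half of Lemma 3.7 for the σ-metric `dp`, defined as the infimum of
`∫ p ds` over rectifiable (arclength-parameterized 1-Lipschitz) curves. -/
theorem sigma_metric_log_lower_bound {X : Type*} [MetricSpace X]
    (p : X → ℝ) (hp : ∀ u, 0 < p u) (hpc : Continuous p)
    (hlip : LipschitzWith 1 fun u => 1 / p u)
    (dp : X → X → ℝ)
    (hdp : ∀ x y : X, dp x y = sInf {r : ℝ | ∃ (L : ℝ) (γ : ℝ → X),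
      0 ≤ L ∧ LipschitzOnWith 1 γ (Set.Icc 0 L) ∧ γ 0 = x ∧ γ L = y ∧
        r = ∫ s in (0:ℝ)..L, p (γ s)})
    (hconn : ∀ x y : X, ∃ (L : ℝ) (γ : ℝ → X),
      0 ≤ L ∧ LipschitzOnWith 1 γ (Set.Icc 0 L) ∧ γ 0 = x ∧ γ L = y) :
    ∀ x y : X,
      Real.log (1 + dist x y * max (p x) (p y)) ≤ dp x y ∧
      |Real.log (1 / p x) - Real.log (1 / p y)| ≤ dp x y := by
  intro x y
  have hd0 : (0:ℝ) ≤ dist x y := dist_nonneg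
  have hmaxpos : 0 < max (p x) (p y) := lt_max_of_lt_left (hp x)
  have hmain : Real.log (1 + dist x y * max (p x) (p y)) ≤ dp x y := by
    rw [hdp]
    apply le_csInf
    · obtain ⟨L, γ, hL, hγ, h0, hE⟩ := hconn x y
      exact ⟨_, L, γ, hL, hγ, h0, hE, rfl⟩
    · rintro r ⟨L, γ, hL, hγ, h0, hE, rfl⟩
      have hdL : dist x y ≤ L := by
        have := hγ.dist_le_mul 0 ⟨le_refl _, hL⟩ L ⟨hL, le_refl _⟩
        rw [h0, hE] at this
        simpa [Real.dist_eq, abs_of_nonneg hL, abs_sub_comm] using this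
      rcases max_choice (p x) (p y) with hmax | hmax
      · rw [hmax]
        have hb := aux_curve_log_bound p hp hpc hlip hL hγ
        rw [h0] at hb
        refine le_trans ?_ hb
        apply Real.log_le_log (by nlinarith [hp x, hd0])
        nlinarith [hp x]
      · rw [hmax]
        set γ' : ℝ → X := fun s => γ (L - s) with hγ'def
        have hγ' : LipschitzOnWith 1 γ' (Set.Icc 0 L) := by
          rw [lipschitzOnWith_iff_dist_le_mul]
          intro s hs t ht
          have hs' : L - s ∈ Set.Icc (0:ℝ) L := ⟨by linarith [hs.2], by linarith [hs.1]⟩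
          have ht' : L - t ∈ Set.Icc (0:ℝ) L := ⟨by linarith [ht.2], by linarith [ht.1]⟩
          have := (lipschitzOnWith_iff_dist_le_mul.mp hγ) _ hs' _ ht'
          have heq : dist (L - s) (L - t) = dist s t := by
            rw [Real.dist_eq, Real.dist_eq]; rw [abs_sub_comm]; ring_nf
          rw [heq] at this
          simpa [hγ'def] using this
        have hb := aux_curve_log_bound p hp hpc hlip hL hγ'
        have hγ'0 : γ' 0 = y := by simp [hγ'def, hE]
        rw [hγ'0] at hb
        have hint : ∫ s in (0:ℝ)..L, p (γ' s) = ∫ s in (0:ℝ)..L, p (γ s) := by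
          have := intervalIntegral.integral_comp_sub_left (a := (0:ℝ)) (b := L)
            (fun t => p (γ t)) L
          simpa [hγ'def] using this
        rw [hint] at hb
        refine le_trans ?_ hb
        apply Real.log_le_log (by nlinarith [hp y, hd0])
        nlinarith [hp y]
  refine ⟨hmain, ?_⟩
  have hlipd : dist (1 / p x) (1 / p y) ≤ dist x y := by
    simpa using hlip.dist_le_mul x y
  rw [Real.dist_eq] at hlipd
  have habs := abs_le.mp hlipd
  rw [abs_sub_le_iff]
  constructor
  · refine le_trans ?_ hmain
    apply aux_log_ratio (one_div_pos.mpr (hp x)) (one_div_pos.mpr (hp y)) hd0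
    · rw [one_div_one_div]; exact le_max_right _ _
    · linarith [habs.1]
  · refine le_trans ?_ hmain
    apply aux_log_ratio (one_div_pos.mpr (hp y)) (one_div_pos.mpr (hp x)) hd0
    · rw [one_div_one_div]; exact le_max_left _ _
    · linarith [habs.2]
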